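/- Let Fr be the free group on r ≥ 1 generators s_1,…,s_r and X = (Z/2Z)^{F_r} with the left shift action. Then the assignment c(s_i, x) = x_{s_i} extends (uniquely) to a continuous cocycle c : F_r × X → Z/2Z, and this cocycle is not cohomologous to any homomorphism F_r → Z/2Z via a continuous transfer map. -/

import Mathlib

instance : TopologicalSpace (ZMod 2) := ⊥
instance : DiscreteTopology (ZMod 2) := ⟨rfl⟩

/-- The left shift action on `(ℤ/2ℤ)^{F_r}`: `(g·x)_h = x_{g⁻¹h}`. -/
def frShift {r : ℕ} (g : FreeGroup (Fin r)) (x : FreeGroup (Fin r) → ZMod 2) :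
    FreeGroup (Fin r) → ZMod 2 := fun h => x (g⁻¹ * h)

lemma frShift_one {r : ℕ} (x : FreeGroup (Fin r) → ZMod 2) : frShift 1 x = x := by
  funext h; simp [frShift]

lemma frShift_mul {r : ℕ} (g₁ g₂ : FreeGroup (Fin r)) (x : FreeGroup (Fin r) → ZMod 2) :
    frShift g₁ (frShift g₂ x) = frShift (g₁ * g₂) x := by
  funext h; simp [frShift, mul_assoc]

lemma continuous_frShift {r : ℕ} (g : FreeGroup (Fin r)) : Continuous (frShift (r := r) g) :=
  continuous_pi fun _ => continuous_apply _

/-- Auxiliary group encoding cocycles: pairs of a "potential cocycle value"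
function and a group element, with twisted multiplication. -/
@[ext]
structure FrC (r : ℕ) where
  f : (FreeGroup (Fin r) → ZMod 2) → ZMod 2
  g : FreeGroup (Fin r)

instance (r : ℕ) : Group (FrC r) where
  mul a b := ⟨fun x => a.f (frShift b.g x) + b.f x, a.g * b.g⟩
  one := ⟨0, 1⟩
  inv a := ⟨fun x => -(a.f (frShift a.g⁻¹ x)), a.g⁻¹⟩
  mul_assoc a b c := by
    refine FrC.ext ?_ (mul_assoc _ _ _)
    funext x
    show a.f (frShift c.g x |> frShift b.g) + b.f (frShift c.g x) + c.f x
        = a.f (frShift (b.g * c.g) x) + (b.f (frShift c.g x) + c.f x)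
    rw [frShift_mul, add_assoc]
  one_mul a := by
    refine FrC.ext ?_ (one_mul _)
    funext x
    show (0 : (FreeGroup (Fin r) → ZMod 2) → ZMod 2) (frShift a.g x) + a.f x = a.f x
    simp
  mul_one a := by
    refine FrC.ext ?_ (mul_one _)
    funext x
    show a.f (frShift 1 x) + (0 : (FreeGroup (Fin r) → ZMod 2) → ZMod 2) x = a.f x
    rw [frShift_one]; simp
  inv_mul_cancel a := by
    refine FrC.ext ?_ (inv_mul_cancel _)
    funext x
    show -(a.f (frShift a.g⁻¹ (frShift a.g x))) + a.f x
        = (0 : (FreeGroup (Fin r) → ZMod 2) → ZMod 2) x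
    rw [frShift_mul, inv_mul_cancel, frShift_one]; exact neg_add_cancel _

/-- The projection to the group component is a homomorphism. -/
def FrC.proj (r : ℕ) : FrC r →* FreeGroup (Fin r) where
  toFun := FrC.g
  map_one' := rfl
  map_mul' _ _ := rfl

/-- The homomorphism defining the canonical cocycle. -/
def frF (r : ℕ) : FreeGroup (Fin r) →* FrC r :=
  FreeGroup.lift fun i => ⟨fun x => x (FreeGroup.of i), FreeGroup.of i⟩

lemma frF_of {r : ℕ} (i : Fin r) :
    frF r (FreeGroup.of i) = ⟨fun x => x (FreeGroup.of i), FreeGroup.of i⟩ :=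
  FreeGroup.lift_apply_of

lemma frF_snd {r : ℕ} (g : FreeGroup (Fin r)) : (frF r g).g = g := by
  have h : (FrC.proj r).comp (frF r) = MonoidHom.id _ := by
    apply FreeGroup.ext_hom
    intro i
    simp [frF_of, FrC.proj]
  exact DFunLike.congr_fun h g

lemma frF_continuous {r : ℕ} (g : FreeGroup (Fin r)) : Continuous (frF r g).f := by
  haveI : ContinuousAdd (ZMod 2) := ⟨continuous_of_discreteTopology⟩
  haveI : ContinuousNeg (ZMod 2) := ⟨continuous_of_discreteTopology⟩
  induction g using FreeGroup.induction_on with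
  | C1 =>
    rw [map_one]
    exact continuous_const
  | of i =>
    show Continuous (frF r (FreeGroup.of i)).f
    rw [frF_of]
    exact continuous_apply _
  | inv_of i _ =>
    show Continuous (frF r (FreeGroup.of i)⁻¹).f
    rw [map_inv, frF_of]
    exact (((continuous_apply _).comp (continuous_frShift _)).neg)
  | mul g₁ g₂ h₁ h₂ =>
    rw [map_mul]
    exact (h₁.comp (continuous_frShift _)).add h₂

theorem stmt_12 (r : ℕ) (hr : 1 ≤ r) :
    (∃! c : FreeGroup (Fin r) → (FreeGroup (Fin r) → ZMod 2) → ZMod 2,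
      (∀ g, Continuous (c g)) ∧
      (∀ g₁ g₂ x, c (g₁ * g₂) x = c g₁ (frShift g₂ x) + c g₂ x) ∧
      (∀ (i : Fin r) (x), c (FreeGroup.of i) x = x (FreeGroup.of i))) ∧
    (∀ c : FreeGroup (Fin r) → (FreeGroup (Fin r) → ZMod 2) → ZMod 2,
      (∀ g, Continuous (c g)) →
      (∀ g₁ g₂ x, c (g₁ * g₂) x = c g₁ (frShift g₂ x) + c g₂ x) →
      (∀ (i : Fin r) (x), c (FreeGroup.of i) x = x (FreeGroup.of i)) →
      ¬ ∃ (b : (FreeGroup (Fin r) → ZMod 2) → ZMod 2)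
          (φ : FreeGroup (Fin r) → ZMod 2),
          Continuous b ∧ (∀ g₁ g₂, φ (g₁ * g₂) = φ g₁ + φ g₂) ∧
          ∀ g x, c g x = -(b (frShift g x)) + φ g + b x) := by
  constructor
  · refine ⟨fun g x => (frF r g).f x, ⟨frF_continuous, ?_, ?_⟩, ?_⟩
    · intro g₁ g₂ x
      show (frF r (g₁ * g₂)).f x = _
      rw [map_mul]
      show (frF r g₁).f (frShift (frF r g₂).g x) + (frF r g₂).f x = _
      rw [frF_snd]
    · intro i x
      show (frF r (FreeGroup.of i)).f x = _
      rw [frF_of]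
    · rintro c' ⟨_, hcoc, hgen⟩
      have hone : ∀ x, c' 1 x = 0 := by
        intro x
        have h := hcoc 1 1 x
        rw [one_mul, frShift_one] at h
        have : c' 1 x + 0 = c' 1 x + c' 1 x := by rw [add_zero]; exact h
        exact (add_left_cancel this).symm
      have hG : MonoidHom.mk' (M := FreeGroup (Fin r)) (fun g => (⟨c' g, g⟩ : FrC r))
          (fun g₁ g₂ => FrC.ext (funext fun x => hcoc g₁ g₂ x) rfl) = frF r := by
        apply FreeGroup.ext_hom
        intro i
        rw [frF_of]
        exact FrC.ext (funext fun x => hgen i x) rfl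
      funext g x
      exact congrFun (congrArg FrC.f (DFunLike.congr_fun hG g)) x
  · rintro c _ _ hgen ⟨b, φ, _, _, hc⟩
    set i : Fin r := ⟨0, hr⟩
    have key : ∀ a : ZMod 2, φ (FreeGroup.of i) = a := by
      intro a
      have hsh : frShift (FreeGroup.of i) (fun _ => a) = fun _ => a := rfl
      have h := hc (FreeGroup.of i) (fun _ => a)
      rw [hgen, hsh] at h
      linear_combination -h
    exact absurd ((key 0).symm.trans (key 1)) (by decide)
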